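/- The quantum Lipschitz constant recovers the classical Lipschitz constant on operators diagonal in the canonical basis: for any function f : [d]^n → ℝ, the diagonal operator F = Σ_{x ∈ [d]^n} f(x) |x⟩⟨x| satisfies ‖F‖_L = ‖f‖_L, where ‖f‖_L = max_{x ≠ y} |f(x) − f(y)| / h(x, y) is the Lipschitz constant of f with respect to the Hamming distance h. -/

import Mathlib

open scoped BigOperators
open scoped Classical
open scoped ComplexOrder

noncomputable section

namespace QW1

/-- Configurations of `n` qudits of local dimension `d`:
the index set of the canonical basis of `(ℂ^d)^{⊗ n}`. -/
abbrev Cfg (d n : ℕ) : Type := Fin n → Fin d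

/-- Linear operators on the Hilbert space of `n` qudits, represented as matrices
in the canonical basis. -/
abbrev Mat (d n : ℕ) : Type := Matrix (Cfg d n) (Cfg d n) ℂ

/-- The trace norm `‖A‖₁ = Tr √(Aᴴ A)`. -/
noncomputable def traceNorm {ι : Type} [Fintype ι] [DecidableEq ι] (A : Matrix ι ι ℂ) : ℝ :=
  (((Matrix.posSemidef_conjTranspose_mul_self A).1.eigenvectorUnitary.1 *
      Matrix.diagonal (fun i => ((Real.sqrt ((Matrix.posSemidef_conjTranspose_mul_self A).1.eigenvalues i) : ℝ) : ℂ)) *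
      (star (Matrix.posSemidef_conjTranspose_mul_self A).1.eigenvectorUnitary : Matrix ι ι ℂ)).trace).re

/-- The operator norm `‖A‖_∞`. -/
noncomputable def opNorm {ι : Type} [Fintype ι] [DecidableEq ι] (A : Matrix ι ι ℂ) : ℝ :=
  ‖Matrix.toEuclideanCLM (𝕜 := ℂ) A‖

/-- Quantum states: positive semidefinite operators with unit trace. -/
def IsState {ι : Type} [Fintype ι] (ρ : Matrix ι ι ℂ) : Prop :=
  ρ.PosSemidef ∧ ρ.trace = 1

/-- Insert the value `s` at position `i` into a configuration `a` of the remaining qudits. -/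
def ins {d n : ℕ} (i : Fin n) (a : {j : Fin n // j ≠ i} → Fin d) (s : Fin d) : Cfg d n :=
  fun j => if h : j = i then s else a ⟨j, h⟩

/-- The partial trace over the `i`-th qudit. -/
noncomputable def ptrace {d n : ℕ} (i : Fin n) (X : Mat d n) :
    Matrix ({j : Fin n // j ≠ i} → Fin d) ({j : Fin n // j ≠ i} → Fin d) ℂ :=
  fun a b => ∑ s : Fin d, X (ins i a s) (ins i b s)

/-- The marginal of `ρ` on the `i`-th qudit (partial trace over all the other qudits). -/
noncomputable def marginal {d n : ℕ} (i : Fin n) (ρ : Mat d n) :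
    Matrix (Fin d) (Fin d) ℂ :=
  fun s t => ∑ a : ({j : Fin n // j ≠ i} → Fin d), ρ (ins i a s) (ins i a t)

/-- Combine a configuration `s` of the qudits in `I` with a configuration `a` of the rest. -/
def insSet {d n : ℕ} (I : Finset (Fin n)) (a : {j : Fin n // j ∉ I} → Fin d)
    (s : {j : Fin n // j ∈ I} → Fin d) : Cfg d n :=
  fun j => if h : j ∈ I then s ⟨j, h⟩ else a ⟨j, h⟩

/-- The partial trace over the qudits in `I`. -/
noncomputable def ptraceSet {d n : ℕ} (I : Finset (Fin n)) (X : Mat d n) :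
    Matrix ({j : Fin n // j ∉ I} → Fin d) ({j : Fin n // j ∉ I} → Fin d) ℂ :=
  fun a b => ∑ s : ({j : Fin n // j ∈ I} → Fin d), X (insSet I a s) (insSet I b s)

/-- The set of values `(1/2) ∑ i ‖X⁽ⁱ⁾‖₁` over all decompositions `X = ∑ i X⁽ⁱ⁾` with
`X⁽ⁱ⁾` self-adjoint and `Tr_i X⁽ⁱ⁾ = 0`. -/
def W1Set {d n : ℕ} (X : Mat d n) : Set ℝ :=
  { r | ∃ Y : Fin n → Mat d n, (∀ i, (Y i).IsHermitian) ∧ (∀ i, ptrace i (Y i) = 0) ∧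
      X = ∑ i, Y i ∧ r = (1 / 2) * ∑ i, traceNorm (Y i) }

/-- The quantum `W₁` norm. -/
noncomputable def W1 {d n : ℕ} (X : Mat d n) : ℝ := sInf (W1Set X)

/-- The quantum Lipschitz constant: the dual norm of the quantum `W₁` norm. -/
noncomputable def lipschitz {d n : ℕ} (H : Mat d n) : ℝ :=
  sSup { r | ∃ X : Mat d n, X.IsHermitian ∧ X.trace = 0 ∧ W1 X ≤ 1 ∧
    r = ((H * X).trace).re }

/-- Extension `Φ ⊗ id_R` of a map on matrices. -/
def extendMap {A B R : Type} [Fintype A] [Fintype B] [Fintype R]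
    (Φ : Matrix A A ℂ → Matrix B B ℂ) (M : Matrix (A × R) (A × R) ℂ) :
    Matrix (B × R) (B × R) ℂ :=
  fun p q => Φ (fun a a' => M (a, p.2) (a', q.2)) p.1 q.1

/-- Quantum channels: completely positive trace-preserving linear maps. -/
def IsCPTP {A B : Type} [Fintype A] [Fintype B]
    (Φ : Matrix A A ℂ →ₗ[ℂ] Matrix B B ℂ) : Prop :=
  (∀ (k : ℕ) (M : Matrix (A × Fin k) (A × Fin k) ℂ), M.PosSemidef →
    (extendMap (fun N => Φ N) M).PosSemidef) ∧
  ∀ M, (Φ M).trace = M.trace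

/-- Action `φ_i ⊗ id` of a single-qudit map `φ` on the `i`-th qudit of `n` qudits. -/
def applyAt {d n : ℕ} (i : Fin n) (φ : Matrix (Fin d) (Fin d) ℂ → Matrix (Fin d) (Fin d) ℂ)
    (X : Mat d n) : Mat d n :=
  fun a b => φ (fun s t => X (Function.update a i s) (Function.update b i t)) (a i) (b i)

/-- Action `φ_I ⊗ id` of a map `φ` on the qudits in `I`. -/
def applyOn {d n : ℕ} (I : Finset (Fin n))
    (φ : Matrix ({j : Fin n // j ∈ I} → Fin d) ({j : Fin n // j ∈ I} → Fin d) ℂ →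
         Matrix ({j : Fin n // j ∈ I} → Fin d) ({j : Fin n // j ∈ I} → Fin d) ℂ)
    (X : Mat d n) : Mat d n :=
  fun a b =>
    φ (fun s t => X (insSet I (fun j => a j) s) (insSet I (fun j => b j) t))
      (fun j => a j) (fun j => b j)

/-- The operator obtained from `X` by permuting the tensor factors according to `π`. -/
def permuteMat {d n : ℕ} (π : Equiv.Perm (Fin n)) (X : Mat d n) : Mat d n :=
  fun a b => X (a ∘ π) (b ∘ π)

/-- Tensor product of an operator on the first `m` qudits with one on the last `n` qudits. -/
def tensorMN {d m n : ℕ} (A : Mat d m) (B : Mat d n) : Mat d (m + n) :=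
  fun a b =>
    A (fun i => a (Fin.castAdd n i)) (fun i => b (Fin.castAdd n i)) *
    B (fun j => a (Fin.natAdd m j)) (fun j => b (Fin.natAdd m j))

/-- Partial trace of an operator on `m + n` qudits over the last `n` qudits. -/
noncomputable def ptraceLast {d m n : ℕ} (X : Mat d (m + n)) : Mat d m :=
  fun a b => ∑ k : Cfg d n, X (Fin.append a k) (Fin.append b k)

/-- Partial trace of an operator on `m + n` qudits over the first `m` qudits. -/
noncomputable def ptraceFirst {d m n : ℕ} (X : Mat d (m + n)) : Mat d n :=
  fun a b => ∑ k : Cfg d m, X (Fin.append k a) (Fin.append k b)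

/-- `n`-fold tensor product `σ₁ ⊗ ⋯ ⊗ σₙ` of single-qudit operators. -/
def tensorAll {d n : ℕ} (σs : Fin n → Matrix (Fin d) (Fin d) ℂ) : Mat d n :=
  fun a b => ∏ i, σs i (a i) (b i)

/-- `I_d^{(i)} ⊗ K`: the identity on the `i`-th qudit tensored with an operator `K`
on the remaining qudits. -/
def idTensorAt {d n : ℕ} (i : Fin n)
    (K : Matrix ({j : Fin n // j ≠ i} → Fin d) ({j : Fin n // j ≠ i} → Fin d) ℂ) :
    Mat d n :=
  fun a b => if a i = b i then K (fun j => a j) (fun j => b j) else 0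

/-- `K ⊗ identity`: an operator acting only on the qudits in `I`. -/
def embedOn {d n : ℕ} (I : Finset (Fin n))
    (K : Matrix ({j : Fin n // j ∈ I} → Fin d) ({j : Fin n // j ∈ I} → Fin d) ℂ) :
    Mat d n :=
  fun a b => if (∀ j, j ∉ I → a j = b j) then K (fun j => a j) (fun j => b j) else 0

/-- The `n`-th tensor power `φ^{⊗n}` of a single-qudit linear map `φ`. -/
noncomputable def tensorPowMap {d n : ℕ}
    (φ : Matrix (Fin d) (Fin d) ℂ → Matrix (Fin d) (Fin d) ℂ) (X : Mat d n) : Mat d n :=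
  fun a b => ∑ s : Cfg d n, ∑ t : Cfg d n,
    X s t * ∏ j, φ (Matrix.single (s j) (t j) 1) (a j) (b j)

/-- The `1 → 1` norm of a map on single-qudit operators. -/
noncomputable def norm1to1 {d : ℕ}
    (F : Matrix (Fin d) (Fin d) ℂ → Matrix (Fin d) (Fin d) ℂ) : ℝ :=
  sSup { r | ∃ ρ : Matrix (Fin d) (Fin d) ℂ, IsState ρ ∧ r = traceNorm (F ρ) }

/-- The diamond norm of a map on single-qudit operators. -/
noncomputable def diamondNorm {d : ℕ}
    (F : Matrix (Fin d) (Fin d) ℂ → Matrix (Fin d) (Fin d) ℂ) : ℝ :=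
  sSup { r | ∃ ρ : Matrix (Fin d × Fin d) (Fin d × Fin d) ℂ, IsState ρ ∧
    r = traceNorm (extendMap F ρ) }

/-- The contraction coefficient (`W₁ → W₁` norm) of a map on `n`-qudit operators. -/
noncomputable def W1toW1 {d n : ℕ} (Φ : Mat d n → Mat d n) : ℝ :=
  sSup { r | ∃ X : Mat d n, X.IsHermitian ∧ X.trace = 0 ∧ W1 X ≤ 1 ∧ r = W1 (Φ X) }

/-- The von Neumann entropy `S(ρ) = -Tr[ρ ln ρ]` (natural logarithm). -/
noncomputable def vnEntropy {ι : Type} [Fintype ι] [DecidableEq ι] (ρ : Matrix ι ι ℂ) : ℝ :=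
  if h : ρ.IsHermitian then -∑ i, h.eigenvalues i * Real.log (h.eigenvalues i) else 0

/-- The logarithm of a self-adjoint matrix, via the spectral decomposition. -/
noncomputable def matLog {ι : Type} [Fintype ι] [DecidableEq ι] (ρ : Matrix ι ι ℂ) :
    Matrix ι ι ℂ :=
  if h : ρ.IsHermitian then
    (h.eigenvectorUnitary : Matrix ι ι ℂ) *
      Matrix.diagonal (fun i => (Real.log (h.eigenvalues i) : ℂ)) *
      (star (h.eigenvectorUnitary : Matrix ι ι ℂ))
  else 0

/-- The quantum relative entropy `S(ρ‖σ) = Tr[ρ (ln ρ - ln σ)]`. -/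
noncomputable def relEntropy {ι : Type} [Fintype ι] [DecidableEq ι]
    (ρ σ : Matrix ι ι ℂ) : ℝ :=
  ((ρ * (matLog ρ - matLog σ)).trace).re

/-- The Hamming distance between two configurations. -/
def hamming {d n : ℕ} (x y : Cfg d n) : ℕ :=
  (Finset.univ.filter (fun i => x i ≠ y i)).card

/-- Probability distributions on a finite set. -/
def IsProb {α : Type} [Fintype α] (p : α → ℝ) : Prop :=
  (∀ x, 0 ≤ p x) ∧ ∑ x, p x = 1

/-- Couplings of two probability distributions. -/
def IsCoupling {α : Type} [Fintype α] (π : α × α → ℝ) (p q : α → ℝ) : Prop :=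
  IsProb π ∧ (∀ x, ∑ y, π (x, y) = p x) ∧ (∀ y, ∑ x, π (x, y) = q y)

/-- The classical Wasserstein distance of order 1 with respect to the Hamming distance. -/
noncomputable def classicalW1 {d n : ℕ} (p q : Cfg d n → ℝ) : ℝ :=
  sInf { c | ∃ π : Cfg d n × Cfg d n → ℝ, IsCoupling π p q ∧
    c = ∑ x : Cfg d n, ∑ y : Cfg d n, (hamming x y : ℝ) * π (x, y) }

/-- The Lipschitz constant of a function on `[d]^n` with respect to the Hamming distance. -/
noncomputable def classicalLip {d n : ℕ} (f : Cfg d n → ℝ) : ℝ :=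
  sSup { r | ∃ x y : Cfg d n, x ≠ y ∧ r = |f x - f y| / (hamming x y : ℝ) }

section TraceNorm
open Matrix

variable {ι : Type} [Fintype ι] [DecidableEq ι]

lemma psd_diag_re_nonneg {M : Matrix ι ι ℂ} (h : M.PosSemidef) (i : ι) : 0 ≤ (M i i).re := by
  exact (Complex.le_def.mp h.diag_nonneg).1

lemma traceNorm_eq_sum_sqrt (A : Matrix ι ι ℂ) :
    traceNorm A = ∑ i, Real.sqrt ((Matrix.posSemidef_conjTranspose_mul_self A).1.eigenvalues i) := by
  unfold traceNorm
  rw [Matrix.trace_mul_cycle]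
  simp [Matrix.trace_diagonal, Complex.re_sum]

lemma traceNorm_herm_aux {A : Matrix ι ι ℂ} (hA : A.IsHermitian) :
    traceNorm A = ∑ k, |hA.eigenvalues k| := by
  have hB := (Matrix.posSemidef_conjTranspose_mul_self A).1
  have h1 : traceNorm A = (cfc Real.sqrt (Aᴴ * A)).trace.re := by
    rw [traceNorm_eq_sum_sqrt, hB.cfc_eq, Matrix.IsHermitian.cfc, Unitary.conjStarAlgAut_apply,
      Matrix.trace_mul_cycle]
    simp [Matrix.trace_diagonal, Complex.re_sum]
  have h2 : Aᴴ * A = cfc (fun x : ℝ => x ^ 2) A := by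
    rw [cfc_pow_id A 2 hA.isSelfAdjoint, hA.eq, sq]
  rw [h1, h2, ← cfc_comp Real.sqrt (fun x : ℝ => x ^ 2) A hA.isSelfAdjoint]
  have h3 : (Real.sqrt ∘ fun x : ℝ => x ^ 2) = fun x => |x| := by
    funext x; simp [Real.sqrt_sq_eq_abs]
  rw [h3, hA.cfc_eq, Matrix.IsHermitian.cfc, Unitary.conjStarAlgAut_apply, Matrix.trace_mul_cycle]
  simp [Matrix.trace_diagonal, Complex.re_sum]

lemma traceNorm_nonneg (A : Matrix ι ι ℂ) : 0 ≤ traceNorm A := by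
  rw [traceNorm_eq_sum_sqrt]
  exact Finset.sum_nonneg fun i _ => Real.sqrt_nonneg _

lemma traceNorm_diagonal_real (c : ι → ℝ) :
    traceNorm (Matrix.diagonal (fun z => (c z : ℂ))) = ∑ z, |c z| := by
  have hD : (Matrix.diagonal (fun z => (c z : ℂ))).IsHermitian := by
    rw [Matrix.IsHermitian, Matrix.diagonal_conjTranspose]
    refine congrArg Matrix.diagonal ?_
    funext z
    simp
  rw [traceNorm_herm_aux hD]
  have key : Multiset.map (fun i => ((hD.eigenvalues i : ℝ) : ℂ)) Finset.univ.val
      = Multiset.map (fun i => (c i : ℂ)) Finset.univ.val := by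
    have h1 := hD.roots_charpoly_eq_eigenvalues
    rw [Matrix.charpoly_diagonal, Polynomial.roots_prod _ _ (by
      simp [Finset.prod_ne_zero_iff, Polynomial.X_sub_C_ne_zero])] at h1
    simpa using h1.symm
  calc ∑ k, |hD.eigenvalues k|
      = ((Multiset.map (fun i => ((hD.eigenvalues i : ℝ) : ℂ)) Finset.univ.val).map
          (fun z : ℂ => |z.re|)).sum := by rw [Multiset.map_map]; rfl
    _ = ((Multiset.map (fun i => (c i : ℂ)) Finset.univ.val).map
          (fun z : ℂ => |z.re|)).sum := by rw [key]
    _ = ∑ z, |c z| := by rw [Multiset.map_map]; rfl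

end TraceNorm
section Spectral
open Matrix

variable {ι : Type} [Fintype ι] [DecidableEq ι]

lemma traceNorm_hermitian {A : Matrix ι ι ℂ} (hA : A.IsHermitian) :
    traceNorm A = ∑ k, |hA.eigenvalues k| := by
  exact traceNorm_herm_aux hA

lemma col_normSq_one {A : Matrix ι ι ℂ} (hA : A.IsHermitian) (k : ι) :
    ∑ z, Complex.normSq ((hA.eigenvectorUnitary : Matrix ι ι ℂ) z k) = 1 := by
  set U : Matrix ι ι ℂ := (hA.eigenvectorUnitary : Matrix ι ι ℂ) with hU
  have hUU : star U * U = 1 := Matrix.UnitaryGroup.star_mul_self _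
  have h1 : (star U * U) k k = 1 := by rw [hUU]; simp
  have h2 : (star U * U) k k = ∑ z, ((Complex.normSq (U z k) : ℝ) : ℂ) := by
    rw [Matrix.mul_apply]
    refine Finset.sum_congr rfl fun z _ => ?_
    rw [Matrix.star_apply, Complex.star_def, mul_comm, Complex.mul_conj]
  rw [h2] at h1
  have := congrArg Complex.re h1
  rw [Complex.re_sum] at this
  simpa using this

lemma sum_abs_diag_re_le_traceNorm {A : Matrix ι ι ℂ} (hA : A.IsHermitian) :
    ∑ z, |(A z z).re| ≤ traceNorm A := by
  set U : Matrix ι ι ℂ := (hA.eigenvectorUnitary : Matrix ι ι ℂ) with hU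
  set e := hA.eigenvalues with he
  have hdiag : ∀ z, (A z z).re = ∑ k, e k * Complex.normSq (U z k) := by
    intro z
    conv_lhs => rw [hA.spectral_theorem, Unitary.conjStarAlgAut_apply]
    rw [Matrix.mul_apply, Complex.re_sum]
    refine Finset.sum_congr rfl fun k _ => ?_
    rw [Matrix.mul_apply]
    rw [Finset.sum_mul, Complex.re_sum]
    rw [Finset.sum_eq_single k]
    · rw [Matrix.diagonal_apply_eq, Matrix.star_apply, Complex.star_def]
      have : U z k * (RCLike.ofReal ∘ e) k * (starRingEnd ℂ) (U z k)
          = ((e k * Complex.normSq (U z k) : ℝ) : ℂ) := by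
        rw [mul_comm (U z k), mul_assoc, Complex.mul_conj]
        push_cast
        simp only [Function.comp_apply, Complex.ofReal_mul]
        ring_nf
        exact mul_comm _ _
      rw [this, Complex.ofReal_re]
    · intro b _ hbk
      rw [Matrix.diagonal_apply_ne _ hbk]
      simp
    · intro h
      exact absurd (Finset.mem_univ k) h
  calc ∑ z, |(A z z).re| ≤ ∑ z, ∑ k, |e k| * Complex.normSq (U z k) := by
        refine Finset.sum_le_sum fun z _ => ?_
        rw [hdiag z]
        refine (Finset.abs_sum_le_sum_abs _ _).trans ?_
        refine Finset.sum_le_sum fun k _ => ?_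
        rw [abs_mul, abs_of_nonneg (Complex.normSq_nonneg _)]
    _ = ∑ k, |e k| * ∑ z, Complex.normSq (U z k) := by
        rw [Finset.sum_comm]
        exact Finset.sum_congr rfl fun k _ => (Finset.mul_sum _ _ _).symm
    _ = ∑ k, |e k| := by
        refine Finset.sum_congr rfl fun k _ => ?_
        rw [col_normSq_one hA k, mul_one]
    _ = traceNorm A := (traceNorm_hermitian hA).symm

end Spectral
section Ins

variable {d n : ℕ}

lemma ins_apply_same (i : Fin n) (a : {j : Fin n // j ≠ i} → Fin d) (s : Fin d) :
    ins i a s i = s := by simp [ins]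

lemma ins_apply_ne (i : Fin n) (a : {j : Fin n // j ≠ i} → Fin d) (s : Fin d)
    {j : Fin n} (h : j ≠ i) : ins i a s j = a ⟨j, h⟩ := by simp [ins, h]

def insEquiv (i : Fin n) : (({j : Fin n // j ≠ i} → Fin d) × Fin d) ≃ Cfg d n where
  toFun p := ins i p.1 p.2
  invFun z := (fun j => z j.1, z i)
  left_inv := by
    rintro ⟨a, s⟩
    refine Prod.ext ?_ ?_
    · funext j
      exact ins_apply_ne i a s j.2
    · exact ins_apply_same i a s
  right_inv := by
    intro z
    funext j
    by_cases h : j = i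
    · subst h; simp [ins]
    · simp [ins, h]

lemma sum_ins {M : Type*} [AddCommMonoid M] (i : Fin n) (g : Cfg d n → M) :
    ∑ z : Cfg d n, g z = ∑ a : {j : Fin n // j ≠ i} → Fin d, ∑ s : Fin d, g (ins i a s) := by
  rw [← Equiv.sum_comp (insEquiv (d := d) i) g, Fintype.sum_prod_type]
  rfl

lemma ins_eq_iff (i : Fin n) (a : {j : Fin n // j ≠ i} → Fin d) (s : Fin d) (w : Cfg d n) :
    ins i a s = w ↔ s = w i ∧ a = fun j => w j.1 := by
  constructor
  · intro h
    constructor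
    · rw [← h]; exact (ins_apply_same i a s).symm
    · funext j
      rw [← h, ins_apply_ne i a s j.2]
  · rintro ⟨rfl, rfl⟩
    funext j
    by_cases h : j = i
    · subst h; exact ins_apply_same _ _ _
    · exact ins_apply_ne _ _ _ h

lemma ins_inj (i : Fin n) (a b : {j : Fin n // j ≠ i} → Fin d) (s t : Fin d)
    (h : ins i a s = ins i b t) : a = b ∧ s = t := by
  have := (insEquiv (d := d) i).injective (show insEquiv i (a, s) = insEquiv i (b, t) from h)
  exact ⟨congrArg Prod.fst this, congrArg Prod.snd this⟩

lemma ptrace_diagonal_eq_zero (i : Fin n) (g : Cfg d n → ℂ)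
    (h : ∀ a, ∑ s, g (ins i a s) = 0) : ptrace i (Matrix.diagonal g) = 0 := by
  funext a b
  show ∑ s : Fin d, Matrix.diagonal g (ins i a s) (ins i b s) = 0
  by_cases hab : a = b
  · subst hab
    calc ∑ s : Fin d, Matrix.diagonal g (ins i a s) (ins i a s)
        = ∑ s, g (ins i a s) := Finset.sum_congr rfl fun s _ => Matrix.diagonal_apply_eq g _
      _ = 0 := h a
  · refine Finset.sum_eq_zero fun s _ => ?_
    refine Matrix.diagonal_apply_ne g ?_
    intro hcon
    exact hab (ins_inj i a b s s hcon).1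

lemma diag_sum_zero_of_ptrace_zero {Y : Mat d n} {i : Fin n} (h : ptrace i Y = 0)
    (a : {j : Fin n // j ≠ i} → Fin d) : ∑ s, Y (ins i a s) (ins i a s) = 0 := by
  have := congrFun (congrFun h a) a
  simpa [ptrace] using this

lemma sum_ite_ins (i : Fin n) (a : {j : Fin n // j ≠ i} → Fin d) (w : Cfg d n) :
    ∑ s : Fin d, (if ins i a s = w then (1 : ℝ) else 0)
      = if a = (fun j => w j.1) then 1 else 0 := by
  simp only [ins_eq_iff]
  by_cases ha : a = fun j => w j.1
  · simp [ha]
  · simp [ha]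

lemma hamming_ins_le_one (i : Fin n) (a : {j : Fin n // j ≠ i} → Fin d) (s t : Fin d) :
    hamming (ins i a s) (ins i a t) ≤ 1 := by
  unfold hamming
  have hsub : (Finset.univ.filter fun j => ins i a s j ≠ ins i a t j) ⊆ {i} := by
    intro j hj
    simp only [Finset.mem_filter, Finset.mem_univ, true_and] at hj
    simp only [Finset.mem_singleton]
    by_contra h
    exact hj (by rw [ins_apply_ne i a s h, ins_apply_ne i a t h])
  calc (Finset.univ.filter fun j => ins i a s j ≠ ins i a t j).card
      ≤ ({i} : Finset (Fin n)).card := Finset.card_le_card hsub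
    _ = 1 := Finset.card_singleton i

lemma one_le_hamming {x y : Cfg d n} (h : x ≠ y) : 1 ≤ hamming x y := by
  unfold hamming
  rw [Nat.one_le_iff_ne_zero, Ne, Finset.card_eq_zero, ← Ne, ← Finset.nonempty_iff_ne_empty]
  obtain ⟨j, hj⟩ := Function.ne_iff.mp h
  exact ⟨j, by simp [hj]⟩

end Ins

section Lip

variable {d n : ℕ} (f : Cfg d n → ℝ)

lemma lipSet_finite :
    Set.Finite {r | ∃ x y : Cfg d n, x ≠ y ∧ r = |f x - f y| / (hamming x y : ℝ)} := by
  refine Set.Finite.subset (Set.finite_range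
    (fun p : Cfg d n × Cfg d n => |f p.1 - f p.2| / (hamming p.1 p.2 : ℝ))) ?_
  rintro r ⟨x, y, _, rfl⟩
  exact ⟨(x, y), rfl⟩

lemma lipSet_nonempty (hd : 2 ≤ d) (hn : 1 ≤ n) :
    {r | ∃ x y : Cfg d n, x ≠ y ∧ r = |f x - f y| / (hamming x y : ℝ)}.Nonempty := by
  have h0 : (⟨0, by omega⟩ : Fin d) ≠ (⟨1, by omega⟩ : Fin d) := by
    intro hcon
    have := congrArg Fin.val hcon
    simp at this
  refine ⟨_, (fun _ => (⟨0, by omega⟩ : Fin d)), (fun _ => (⟨1, by omega⟩ : Fin d)), ?_, rfl⟩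
  intro hcon
  exact h0 (congrFun hcon ⟨0, hn⟩)

lemma classicalLip_nonneg (hd : 2 ≤ d) (hn : 1 ≤ n) : 0 ≤ classicalLip f := by
  obtain ⟨r, hr⟩ := lipSet_nonempty f hd hn
  refine le_trans ?_ (le_csSup (lipSet_finite f).bddAbove hr)
  obtain ⟨x, y, _, rfl⟩ := hr
  positivity

lemma abs_sub_le_lip (hd : 2 ≤ d) (hn : 1 ≤ n) (x y : Cfg d n) :
    |f x - f y| ≤ classicalLip f * hamming x y := by
  by_cases hxy : x = y
  · subst hxy
    simp only [sub_self, abs_zero]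
    exact mul_nonneg (classicalLip_nonneg f hd hn) (Nat.cast_nonneg _)
  · have hmem : |f x - f y| / (hamming x y : ℝ) ∈
        {r | ∃ x y : Cfg d n, x ≠ y ∧ r = |f x - f y| / (hamming x y : ℝ)} := ⟨x, y, hxy, rfl⟩
    have hle := le_csSup (lipSet_finite f).bddAbove hmem
    have hpos : (0 : ℝ) < (hamming x y : ℝ) := by
      exact_mod_cast Nat.lt_of_lt_of_le Nat.zero_lt_one (one_le_hamming hxy)
    rw [div_le_iff₀ hpos] at hle
    calc |f x - f y| ≤ classicalLip f * (hamming x y : ℝ) := hle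

lemma exists_lip_opt (hd : 2 ≤ d) (hn : 1 ≤ n) :
    ∃ x y : Cfg d n, x ≠ y ∧ classicalLip f = |f x - f y| / (hamming x y : ℝ) := by
  have := Set.Nonempty.csSup_mem (lipSet_nonempty f hd hn) (lipSet_finite f)
  exact this

end Lip
section Decomp

variable {d n : ℕ}

/-- Level-`k` smoothing: qudits with index `< k` are replaced by the maximally mixed state
after tracing them out. -/
noncomputable def Mlev (X : Mat d n) (k : ℕ) : Mat d n :=
  fun a b => if ∀ j : Fin n, (j : ℕ) < k → a j = b j then
    ((d : ℂ) ^ n)⁻¹ * ∑ s : Cfg d n,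
      X (fun j : Fin n => if (j : ℕ) < k then s j else a j) (fun j : Fin n => if (j : ℕ) < k then s j else b j)
  else 0

lemma Mlev_zero (hd : d ≠ 0) (X : Mat d n) : Mlev X 0 = X := by
  funext a b
  unfold Mlev
  rw [if_pos (fun j h => absurd h (Nat.not_lt_zero _))]
  have h1 : ∀ s : Cfg d n,
      X (fun j : Fin n => if (j : ℕ) < 0 then s j else a j) (fun j : Fin n => if (j : ℕ) < 0 then s j else b j)
        = X a b := by
    intro s
    have ha : (fun j : Fin n => if (j : ℕ) < 0 then s j else a j) = a := by funext j; simp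
    have hb : (fun j : Fin n => if (j : ℕ) < 0 then s j else b j) = b := by funext j; simp
    rw [ha, hb]
  rw [Finset.sum_congr rfl fun s _ => h1 s, Finset.sum_const]
  have hcard : (Finset.univ : Finset (Cfg d n)).card = d ^ n := by
    rw [Finset.card_univ]
    simp [Fintype.card_fun]
  rw [hcard, nsmul_eq_mul]
  push_cast
  rw [← mul_assoc, inv_mul_cancel₀ (pow_ne_zero _ (Nat.cast_ne_zero.mpr hd)), one_mul]

lemma Mlev_top {X : Mat d n} (htr : X.trace = 0) : Mlev X n = 0 := by
  funext a b
  unfold Mlev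
  by_cases hab : ∀ j : Fin n, (j : ℕ) < n → a j = b j
  · rw [if_pos hab]
    have h1 : ∀ s : Cfg d n,
        X (fun j : Fin n => if (j : ℕ) < n then s j else a j) (fun j : Fin n => if (j : ℕ) < n then s j else b j)
          = X s s := by
      intro s
      congr 1 <;> funext j <;> rw [if_pos j.isLt]
    rw [Finset.sum_congr rfl fun s _ => h1 s]
    have : ∑ s : Cfg d n, X s s = X.trace := rfl
    rw [this, htr, mul_zero, Matrix.zero_apply]
  · rw [if_neg hab, Matrix.zero_apply]

lemma Mlev_isHermitian {X : Mat d n} (hX : X.IsHermitian) (k : ℕ) :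
    (Mlev X k).IsHermitian := by
  refine Matrix.IsHermitian.ext fun a b => ?_
  show star (Mlev X k b a) = Mlev X k a b
  unfold Mlev
  have hcond : (∀ j : Fin n, (j : ℕ) < k → b j = a j) ↔ (∀ j : Fin n, (j : ℕ) < k → a j = b j) := by
    constructor <;> intro h j hj <;> exact (h j hj).symm
  by_cases hab : ∀ j : Fin n, (j : ℕ) < k → a j = b j
  · have h1 : ∀ s : Cfg d n,
        star (X (fun j : Fin n => if (j : ℕ) < k then s j else b j)
          (fun j : Fin n => if (j : ℕ) < k then s j else a j))
        = X (fun j : Fin n => if (j : ℕ) < k then s j else a j)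
          (fun j : Fin n => if (j : ℕ) < k then s j else b j) := by
      intro s
      exact hX.apply _ _
    rw [if_pos hab, if_pos (hcond.mpr hab), star_mul', star_sum,
      Finset.sum_congr rfl fun s _ => h1 s]
    have hc : star ((((d:ℂ)) ^ n)⁻¹) = (((d:ℂ)) ^ n)⁻¹ := by
      rw [star_inv₀, star_pow, star_natCast]
    rw [hc]
  · rw [if_neg hab, if_neg (fun h => hab (hcond.mp h)), star_zero]

lemma ptrace_Mlev (X : Mat d n) (i : Fin n) :
    ptrace i (Mlev X ((i : ℕ) + 1)) = ptrace i (Mlev X (i : ℕ)) := by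
  funext a b
  show (∑ t : Fin d, Mlev X ((i:ℕ)+1) (ins i a t) (ins i b t))
      = ∑ t : Fin d, Mlev X (i:ℕ) (ins i a t) (ins i b t)
  have hC : ∀ (t : Fin d) (k : ℕ), (k = (i:ℕ) ∨ k = (i:ℕ)+1) →
      ((∀ j : Fin n, (j:ℕ) < k → ins i a t j = ins i b t j) ↔
       (∀ (j : Fin n) (h : j ≠ i), (j:ℕ) < (i:ℕ) → a ⟨j, h⟩ = b ⟨j, h⟩)) := by
    intro t k hk
    constructor
    · intro h j hj hlt
      have hlt' : (j:ℕ) < k := by rcases hk with rfl | rfl <;> omega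
      have := h j hlt'
      rwa [ins_apply_ne i a t hj, ins_apply_ne i b t hj] at this
    · intro h j hlt
      by_cases hji : j = i
      · subst hji
        rw [ins_apply_same, ins_apply_same]
      · have hlt' : (j:ℕ) < (i:ℕ) := by
          have hne : (j:ℕ) ≠ (i:ℕ) := fun hcon => hji (Fin.ext hcon)
          rcases hk with rfl | rfl <;> omega
        rw [ins_apply_ne i a t hji, ins_apply_ne i b t hji]
        exact h j hji hlt'
  by_cases hC0 : ∀ (j : Fin n) (h : j ≠ i), (j:ℕ) < (i:ℕ) → a ⟨j, h⟩ = b ⟨j, h⟩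
  · -- both conditions hold
    have hL : ∀ t : Fin d, Mlev X ((i:ℕ)+1) (ins i a t) (ins i b t) =
        ((d : ℂ) ^ n)⁻¹ * ∑ s : Cfg d n,
          X (fun j : Fin n => if (j : ℕ) < (i:ℕ)+1 then s j else ins i a t j)
            (fun j : Fin n => if (j : ℕ) < (i:ℕ)+1 then s j else ins i b t j) := by
      intro t
      unfold Mlev
      rw [if_pos ((hC t _ (Or.inr rfl)).mpr hC0)]
    have hR : ∀ t : Fin d, Mlev X (i:ℕ) (ins i a t) (ins i b t) =
        ((d : ℂ) ^ n)⁻¹ * ∑ s : Cfg d n,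
          X (fun j : Fin n => if (j : ℕ) < (i:ℕ) then s j else ins i a t j)
            (fun j : Fin n => if (j : ℕ) < (i:ℕ) then s j else ins i b t j) := by
      intro t
      unfold Mlev
      rw [if_pos ((hC t _ (Or.inl rfl)).mpr hC0)]
    rw [Finset.sum_congr rfl fun t _ => hL t, Finset.sum_congr rfl fun t _ => hR t]
    rw [← Finset.mul_sum, ← Finset.mul_sum]
    congr 1
    -- key combinatorial identity
    -- abbreviations
    set v : Cfg d n → Cfg d n :=
      fun s => fun j : Fin n => if (j : ℕ) < (i:ℕ) then s j else ins i a (s i) j with hv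
    set v' : Cfg d n → Cfg d n :=
      fun s => fun j : Fin n => if (j : ℕ) < (i:ℕ) then s j else ins i b (s i) j with hv'
    have hw : ∀ (t : Fin d) (s : Cfg d n),
        (fun j : Fin n => if (j : ℕ) < (i:ℕ)+1 then s j else ins i a t j) = v s := by
      intro t s
      funext j
      simp only [hv]
      rcases Nat.lt_trichotomy (j:ℕ) (i:ℕ) with hlt | heq | hgt
      · rw [if_pos (by omega : (j:ℕ) < (i:ℕ)+1), if_pos hlt]
      · have hji : j = i := Fin.ext heq
        subst hji
        rw [if_pos (by omega), if_neg (by omega), ins_apply_same]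
      · have hji : j ≠ i := fun hcon => by subst hcon; omega
        rw [if_neg (by omega : ¬ (j:ℕ) < (i:ℕ)+1), if_neg (by omega : ¬ (j:ℕ) < (i:ℕ)),
          ins_apply_ne i a t hji, ins_apply_ne i a (s i) hji]
    have hw' : ∀ (t : Fin d) (s : Cfg d n),
        (fun j : Fin n => if (j : ℕ) < (i:ℕ)+1 then s j else ins i b t j) = v' s := by
      intro t s
      funext j
      simp only [hv']
      rcases Nat.lt_trichotomy (j:ℕ) (i:ℕ) with hlt | heq | hgt
      · rw [if_pos (by omega : (j:ℕ) < (i:ℕ)+1), if_pos hlt]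
      · have hji : j = i := Fin.ext heq
        subst hji
        rw [if_pos (by omega), if_neg (by omega), ins_apply_same]
      · have hji : j ≠ i := fun hcon => by subst hcon; omega
        rw [if_neg (by omega : ¬ (j:ℕ) < (i:ℕ)+1), if_neg (by omega : ¬ (j:ℕ) < (i:ℕ)),
          ins_apply_ne i b t hji, ins_apply_ne i b (s i) hji]
    have hu : ∀ (t : Fin d) (s : Cfg d n),
        (fun j : Fin n => if (j : ℕ) < (i:ℕ) then s j else ins i a t j)
          = v (Function.update s i t) := by
      intro t s
      funext j
      simp only [hv]
      rcases Nat.lt_trichotomy (j:ℕ) (i:ℕ) with hlt | heq | hgt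
      · have hji : j ≠ i := fun hcon => by subst hcon; omega
        rw [if_pos hlt, if_pos hlt, Function.update_of_ne hji]
      · have hji : j = i := Fin.ext heq
        subst hji
        rw [if_neg (by omega), if_neg (by omega), ins_apply_same, ins_apply_same,
          Function.update_self]
      · have hji : j ≠ i := fun hcon => by subst hcon; omega
        rw [if_neg (by omega : ¬ (j:ℕ) < (i:ℕ)), if_neg (by omega : ¬ (j:ℕ) < (i:ℕ)),
          ins_apply_ne i a t hji, ins_apply_ne i a _ hji]
    have hu' : ∀ (t : Fin d) (s : Cfg d n),
        (fun j : Fin n => if (j : ℕ) < (i:ℕ) then s j else ins i b t j)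
          = v' (Function.update s i t) := by
      intro t s
      funext j
      simp only [hv']
      rcases Nat.lt_trichotomy (j:ℕ) (i:ℕ) with hlt | heq | hgt
      · have hji : j ≠ i := fun hcon => by subst hcon; omega
        rw [if_pos hlt, if_pos hlt, Function.update_of_ne hji]
      · have hji : j = i := Fin.ext heq
        subst hji
        rw [if_neg (by omega), if_neg (by omega), ins_apply_same, ins_apply_same,
          Function.update_self]
      · have hji : j ≠ i := fun hcon => by subst hcon; omega
        rw [if_neg (by omega : ¬ (j:ℕ) < (i:ℕ)), if_neg (by omega : ¬ (j:ℕ) < (i:ℕ)),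
          ins_apply_ne i b t hji, ins_apply_ne i b _ hji]
    calc ∑ t : Fin d, ∑ s : Cfg d n,
          X (fun j : Fin n => if (j : ℕ) < (i:ℕ)+1 then s j else ins i a t j)
            (fun j : Fin n => if (j : ℕ) < (i:ℕ)+1 then s j else ins i b t j)
        = ∑ t : Fin d, ∑ s : Cfg d n, X (v s) (v' s) := by
          refine Finset.sum_congr rfl fun t _ => Finset.sum_congr rfl fun s _ => ?_
          rw [hw t s, hw' t s]
      _ = ∑ p : Cfg d n × Fin d, X (v p.1) (v' p.1) := by
          rw [Fintype.sum_prod_type]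
          exact Finset.sum_comm
      _ = ∑ p : Cfg d n × Fin d, X (v (Function.update p.1 i p.2)) (v' (Function.update p.1 i p.2)) := by
          have hinv : Function.Involutive
              (fun p : Cfg d n × Fin d => (Function.update p.1 i p.2, p.1 i)) := by
            rintro ⟨s, t⟩
            show (Function.update (Function.update s i t) i (s i),
              Function.update s i t i) = (s, t)
            rw [Function.update_idem, Function.update_eq_self, Function.update_self]
          exact (Fintype.sum_equiv hinv.toPerm
            (fun p => X (v (Function.update p.1 i p.2)) (v' (Function.update p.1 i p.2)))
            (fun p => X (v p.1) (v' p.1)) (fun p => rfl)).symm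
      _ = ∑ t : Fin d, ∑ s : Cfg d n,
          X (fun j : Fin n => if (j : ℕ) < (i:ℕ) then s j else ins i a t j)
            (fun j : Fin n => if (j : ℕ) < (i:ℕ) then s j else ins i b t j) := by
          rw [Fintype.sum_prod_type]
          rw [Finset.sum_comm]
          refine Finset.sum_congr rfl fun t _ => Finset.sum_congr rfl fun s _ => ?_
          rw [hu t s, hu' t s]
  · rw [Finset.sum_eq_zero, Finset.sum_eq_zero]
    · intro t _
      unfold Mlev
      rw [if_neg (fun hcon => hC0 ((hC t _ (Or.inl rfl)).mp hcon))]
    · intro t _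
      unfold Mlev
      rw [if_neg (fun hcon => hC0 ((hC t _ (Or.inr rfl)).mp hcon))]

end Decomp
section W1Facts

variable {d n : ℕ}

lemma hamming_comm (x y : Cfg d n) : hamming x y = hamming y x := by
  unfold hamming
  congr 1
  ext j
  simp only [Finset.mem_filter, Finset.mem_univ, true_and]
  exact ne_comm

lemma diag_real_isHermitian (c : Cfg d n → ℝ) :
    (Matrix.diagonal (fun z => (c z : ℂ)) : Mat d n).IsHermitian := by
  rw [Matrix.IsHermitian, Matrix.diagonal_conjTranspose]
  refine congrArg Matrix.diagonal ?_
  funext z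
  show star ((c z : ℂ)) = (c z : ℂ)
  rw [Complex.star_def, Complex.conj_ofReal]

lemma ptrace_sub (i : Fin n) (A B : Mat d n) :
    ptrace i (A - B) = ptrace i A - ptrace i B := by
  funext a b
  show (∑ s : Fin d, (A - B) (ins i a s) (ins i b s))
    = (∑ s : Fin d, A (ins i a s) (ins i b s)) - ∑ s : Fin d, B (ins i a s) (ins i b s)
  rw [← Finset.sum_sub_distrib]
  rfl

lemma W1Set_nonneg {X : Mat d n} {r : ℝ} (hr : r ∈ W1Set X) : 0 ≤ r := by
  obtain ⟨Y, _, _, _, rfl⟩ := hr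
  have h0 : (0:ℝ) ≤ ∑ i, traceNorm (Y i) := Finset.sum_nonneg fun i _ => traceNorm_nonneg _
  linarith

lemma W1Set_nonempty (hd : d ≠ 0) {X : Mat d n} (hX : X.IsHermitian) (htr : X.trace = 0) :
    (W1Set X).Nonempty := by
  refine ⟨_, fun i => Mlev X (i:ℕ) - Mlev X ((i:ℕ)+1),
    fun i => (Mlev_isHermitian hX _).sub (Mlev_isHermitian hX _), fun i => ?_, ?_, rfl⟩
  · rw [ptrace_sub, ptrace_Mlev, sub_self]
  · have h1 : ∑ i : Fin n, (Mlev X (i:ℕ) - Mlev X ((i:ℕ)+1))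
        = ∑ k ∈ Finset.range n, (Mlev X k - Mlev X (k+1)) :=
      Fin.sum_univ_eq_sum_range (fun k => Mlev X k - Mlev X (k+1)) n
    rw [h1, Finset.sum_range_sub' (fun k => Mlev X k), Mlev_zero hd, Mlev_top htr, sub_zero]

lemma trace_diag_mul (g : Cfg d n → ℝ) (Y : Mat d n) :
    (((Matrix.diagonal (fun x => (g x : ℂ)) : Mat d n) * Y).trace).re
      = ∑ z, g z * (Y z z).re := by
  rw [Matrix.trace, Complex.re_sum]
  refine Finset.sum_congr rfl fun z _ => ?_
  have h1 : ((Matrix.diagonal (fun x => (g x : ℂ)) : Mat d n) * Y) z z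
      = (g z : ℂ) * Y z z := by
    rw [Matrix.mul_apply, Finset.sum_eq_single z]
    · rw [Matrix.diagonal_apply_eq]
    · intro b _ hbz
      rw [Matrix.diagonal_apply_ne _ (Ne.symm hbz), zero_mul]
    · intro hcon
      exact absurd (Finset.mem_univ z) hcon
  rw [Matrix.diag_apply, h1, Complex.re_ofReal_mul]

lemma trace_diag_mul_le (hd : 2 ≤ d) (hn : 1 ≤ n) (f : Cfg d n → ℝ) {Y : Mat d n} (i : Fin n)
    (hY : Y.IsHermitian) (hpt : ptrace i Y = 0) :
    (((Matrix.diagonal (fun x => (f x : ℂ)) : Mat d n) * Y).trace).re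
      ≤ (classicalLip f / 2) * traceNorm Y := by
  haveI : Nonempty (Fin d) := ⟨⟨0, by omega⟩⟩
  set L := classicalLip f with hLdef
  rw [trace_diag_mul]
  rw [sum_ins i (fun z => f z * (Y z z).re)]
  -- center constant per block
  set c : ({j : Fin n // j ≠ i} → Fin d) → ℝ := fun a =>
    ((Finset.univ.sup' Finset.univ_nonempty fun s => f (ins i a s)) +
     (Finset.univ.inf' Finset.univ_nonempty fun s => f (ins i a s))) / 2 with hc
  have habs : ∀ (a : {j : Fin n // j ≠ i} → Fin d) (s : Fin d),
      |f (ins i a s) - c a| ≤ L / 2 := by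
    intro a s
    obtain ⟨s1, _, hs1⟩ := Finset.exists_mem_eq_sup' Finset.univ_nonempty
      (fun s => f (ins i a s))
    obtain ⟨s2, _, hs2⟩ := Finset.exists_mem_eq_inf' Finset.univ_nonempty
      (fun s => f (ins i a s))
    have hgap : (Finset.univ.sup' Finset.univ_nonempty fun s => f (ins i a s)) -
        (Finset.univ.inf' Finset.univ_nonempty fun s => f (ins i a s)) ≤ L := by
      rw [hs1, hs2]
      have h1 : f (ins i a s1) - f (ins i a s2) ≤ |f (ins i a s1) - f (ins i a s2)| :=
        le_abs_self _
      have h2 := abs_sub_le_lip f hd hn (ins i a s1) (ins i a s2)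
      have h3 : (hamming (ins i a s1) (ins i a s2) : ℝ) ≤ 1 := by
        exact_mod_cast hamming_ins_le_one i a s1 s2
      have h4 : L * (hamming (ins i a s1) (ins i a s2) : ℝ) ≤ L * 1 :=
        mul_le_mul_of_nonneg_left h3 (classicalLip_nonneg f hd hn)
      rw [mul_one] at h4
      linarith
    have hup : f (ins i a s) ≤ Finset.univ.sup' Finset.univ_nonempty fun s => f (ins i a s) :=
      Finset.le_sup' (fun s => f (ins i a s)) (Finset.mem_univ s)
    have hlo : Finset.univ.inf' Finset.univ_nonempty (fun s => f (ins i a s)) ≤ f (ins i a s) :=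
      Finset.inf'_le (fun s => f (ins i a s)) (Finset.mem_univ s)
    rw [abs_le, hc]
    constructor <;> [skip; skip] <;> dsimp only <;> linarith
  calc ∑ a : {j : Fin n // j ≠ i} → Fin d, ∑ s : Fin d, f (ins i a s) * (Y (ins i a s) (ins i a s)).re
      = ∑ a : {j : Fin n // j ≠ i} → Fin d, ∑ s : Fin d,
          (f (ins i a s) - c a) * (Y (ins i a s) (ins i a s)).re := by
        refine Finset.sum_congr rfl fun a _ => ?_
        have hzero : ∑ s : Fin d, (Y (ins i a s) (ins i a s)).re = 0 := by
          have h0 := diag_sum_zero_of_ptrace_zero hpt a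
          have h1 := congrArg Complex.re h0
          rwa [Complex.re_sum] at h1
        symm
        calc ∑ s : Fin d, (f (ins i a s) - c a) * (Y (ins i a s) (ins i a s)).re
            = (∑ s : Fin d, f (ins i a s) * (Y (ins i a s) (ins i a s)).re)
              - c a * ∑ s : Fin d, (Y (ins i a s) (ins i a s)).re := by
              rw [Finset.mul_sum, ← Finset.sum_sub_distrib]
              exact Finset.sum_congr rfl fun s _ => sub_mul _ _ _
          _ = ∑ s : Fin d, f (ins i a s) * (Y (ins i a s) (ins i a s)).re := by
              rw [hzero, mul_zero, sub_zero]
    _ ≤ ∑ a : {j : Fin n // j ≠ i} → Fin d, ∑ s : Fin d,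
          (L / 2) * |(Y (ins i a s) (ins i a s)).re| := by
        refine Finset.sum_le_sum fun a _ => Finset.sum_le_sum fun s _ => ?_
        calc (f (ins i a s) - c a) * (Y (ins i a s) (ins i a s)).re
            ≤ |(f (ins i a s) - c a) * (Y (ins i a s) (ins i a s)).re| := le_abs_self _
          _ = |f (ins i a s) - c a| * |(Y (ins i a s) (ins i a s)).re| := abs_mul _ _
          _ ≤ (L / 2) * |(Y (ins i a s) (ins i a s)).re| :=
              mul_le_mul_of_nonneg_right (habs a s) (abs_nonneg _)
    _ = (L / 2) * ∑ z, |(Y z z).re| := by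
        simp only [← Finset.mul_sum]
        congr 1
        exact (sum_ins i (fun z => |(Y z z).re|)).symm
    _ ≤ (L / 2) * traceNorm Y := by
        refine mul_le_mul_of_nonneg_left (sum_abs_diag_re_le_traceNorm hY) ?_
        have := classicalLip_nonneg f hd hn
        linarith

end W1Facts
section Main

variable {d n : ℕ}

lemma lip_mem (hd : 2 ≤ d) (hn : 1 ≤ n) (f : Cfg d n → ℝ) :
    ∃ X : Mat d n, X.IsHermitian ∧ X.trace = 0 ∧ W1 X ≤ 1 ∧
      classicalLip f = (((Matrix.diagonal (fun x => (f x : ℂ)) : Mat d n) * X).trace).re := by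
  obtain ⟨x0, y0, hxy0, hLeq0⟩ := exists_lip_opt f hd hn
  obtain ⟨x, y, hxy, hfxy, hLeq⟩ : ∃ x y : Cfg d n, x ≠ y ∧ f y ≤ f x ∧
      classicalLip f = (f x - f y) / (hamming x y : ℝ) := by
    rcases le_total (f y0) (f x0) with hcmp | hcmp
    · exact ⟨x0, y0, hxy0, hcmp, by rw [hLeq0, abs_of_nonneg (by linarith)]⟩
    · refine ⟨y0, x0, hxy0.symm, hcmp, ?_⟩
      rw [hLeq0, abs_sub_comm, abs_of_nonneg (by linarith), hamming_comm]
  have hh1 : 1 ≤ hamming x y := one_le_hamming hxy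
  have hhR : (0:ℝ) < (hamming x y : ℝ) := by exact_mod_cast hh1
  set h : ℕ := hamming x y with hh
  set U : ℕ → Cfg d n := fun k j => if (j:ℕ) < k then y j else x j with hU
  have hU0 : U 0 = x := by funext j; simp [hU]
  have hUn : U n = y := by funext j; simp [hU, j.isLt]
  have hUoff : ∀ (i : Fin n) (j : Fin n), j ≠ i → U (i:ℕ) j = U ((i:ℕ)+1) j := by
    intro i j hji
    have hne : (j:ℕ) ≠ (i:ℕ) := fun hcon => hji (Fin.ext hcon)
    simp only [hU]
    rcases Nat.lt_trichotomy (j:ℕ) (i:ℕ) with hlt | heq | hgt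
    · rw [if_pos hlt, if_pos (by omega)]
    · exact absurd heq hne
    · rw [if_neg (by omega), if_neg (by omega)]
  have hUii : ∀ i : Fin n, U (i:ℕ) i = x i := by intro i; simp [hU]
  have hUsi : ∀ i : Fin n, U ((i:ℕ)+1) i = y i := by intro i; simp [hU]
  have hUeq : ∀ i : Fin n, x i = y i → U (i:ℕ) = U ((i:ℕ)+1) := by
    intro i hxyi
    funext j
    by_cases hji : j = i
    · rw [hji, hUii, hUsi]; exact hxyi
    · exact hUoff i j hji
  set c : Cfg d n → ℝ := fun z =>
    ((if z = x then 1 else 0) - (if z = y then 1 else 0)) / h with hcdef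
  set q : Fin n → Cfg d n → ℝ := fun i z =>
    ((if z = U (i:ℕ) then 1 else 0) - (if z = U ((i:ℕ)+1) then 1 else 0)) / h with hqdef
  refine ⟨Matrix.diagonal (fun z => (c z : ℂ)), diag_real_isHermitian c, ?_, ?_, ?_⟩
  · -- trace zero
    rw [Matrix.trace_diagonal]
    have hsum : ∑ z, c z = 0 := by
      simp only [hcdef]
      rw [← Finset.sum_div, Finset.sum_sub_distrib]
      rw [Finset.sum_ite_eq' Finset.univ x (fun _ => (1:ℝ)),
        Finset.sum_ite_eq' Finset.univ y (fun _ => (1:ℝ))]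
      simp
    calc ∑ z, (c z : ℂ) = ((∑ z, c z : ℝ) : ℂ) := by rw [Complex.ofReal_sum]
      _ = 0 := by rw [hsum]; simp
  · -- W1 ≤ 1
    have hone : (1:ℝ) ∈ W1Set (Matrix.diagonal (fun z => (c z : ℂ))) := by
      refine ⟨fun i => Matrix.diagonal (fun z => (q i z : ℂ)),
        fun i => diag_real_isHermitian _, fun i => ?_, ?_, ?_⟩
      · -- ptrace zero
        refine ptrace_diagonal_eq_zero i _ fun a => ?_
        have hreal : ∑ s, q i (ins i a s) = 0 := by
          simp only [hqdef]
          rw [← Finset.sum_div, Finset.sum_sub_distrib, sum_ite_ins, sum_ite_ins]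
          have hrestr : (fun (j : {j : Fin n // j ≠ i}) => U (i:ℕ) j.1)
              = fun (j : {j : Fin n // j ≠ i}) => U ((i:ℕ)+1) j.1 := by
            funext j; exact hUoff i j.1 j.2
          rw [hrestr, sub_self, zero_div]
        calc ∑ s : Fin d, ((q i (ins i a s) : ℝ) : ℂ)
            = ((∑ s : Fin d, q i (ins i a s) : ℝ) : ℂ) := by rw [Complex.ofReal_sum]
          _ = 0 := by rw [hreal]; simp
      · -- X = sum of pieces
        funext a b
        rw [Matrix.sum_apply]
        by_cases hab : a = b
        · subst hab
          simp only [Matrix.diagonal_apply_eq]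
          have hreal : c a = ∑ i : Fin n, q i a := by
            have hq : ∀ i : Fin n, q i a =
                (if a = U (i:ℕ) then (1:ℝ) else 0)/h - (if a = U ((i:ℕ)+1) then 1 else 0)/h := by
              intro i; simp only [hqdef]; rw [sub_div]
            rw [Finset.sum_congr rfl fun i _ => hq i]
            rw [Fin.sum_univ_eq_sum_range (fun k => (if a = U k then (1:ℝ) else 0)/h
              - (if a = U (k+1) then 1 else 0)/h) n]
            rw [Finset.sum_range_sub' (fun k => (if a = U k then (1:ℝ) else 0)/h)]
            rw [hU0, hUn]
            simp only [hcdef]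
            rw [sub_div]
          rw [hreal, Complex.ofReal_sum]
        · rw [Matrix.diagonal_apply_ne _ hab]
          symm
          exact Finset.sum_eq_zero fun i _ => Matrix.diagonal_apply_ne _ hab
      · -- the value is 1
        have htn : ∀ i : Fin n, traceNorm (Matrix.diagonal (fun z => (q i z : ℂ)))
            = if x i = y i then 0 else 2/(h:ℝ) := by
          intro i
          rw [traceNorm_diagonal_real]
          by_cases hxyi : x i = y i
          · rw [if_pos hxyi]
            have hq0 : ∀ z, q i z = 0 := by
              intro z; simp only [hqdef]
              rw [← hUeq i hxyi, sub_self, zero_div]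
            simp [hq0]
          · rw [if_neg hxyi]
            have hUne : U (i:ℕ) ≠ U ((i:ℕ)+1) := by
              intro hcon
              exact hxyi (by rw [← hUii i, ← hUsi i, hcon])
            have habs : ∀ z, |q i z| = (if z = U (i:ℕ) then (1:ℝ) else 0)/h
                + (if z = U ((i:ℕ)+1) then 1 else 0)/h := by
              intro z
              simp only [hqdef]
              by_cases h1 : z = U (i:ℕ)
              · have h2 : ¬ z = U ((i:ℕ)+1) := fun hcon => hUne (h1.symm.trans hcon)
                rw [if_pos h1, if_neg h2, sub_zero, zero_div, add_zero, abs_div, abs_one,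
                  abs_of_nonneg (le_of_lt hhR)]
              · by_cases h2 : z = U ((i:ℕ)+1)
                · rw [if_neg h1, if_pos h2, zero_sub, abs_div, abs_neg, abs_one,
                    abs_of_nonneg (le_of_lt hhR), zero_div, zero_add]
                · rw [if_neg h1, if_neg h2]
                  simp
            rw [Finset.sum_congr rfl fun z _ => habs z]
            rw [Finset.sum_add_distrib, ← Finset.sum_div, ← Finset.sum_div]
            rw [Finset.sum_ite_eq' Finset.univ (U (i:ℕ)) (fun _ => (1:ℝ)),
              Finset.sum_ite_eq' Finset.univ (U ((i:ℕ)+1)) (fun _ => (1:ℝ))]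
            simp only [Finset.mem_univ, if_pos]
            ring
        rw [Finset.sum_congr rfl fun i _ => htn i]
        have hsplit : ∑ i : Fin n, (if x i = y i then (0:ℝ) else 2/(h:ℝ))
            = ((Finset.univ.filter fun i => ¬ (x i = y i)).card : ℝ) * (2/(h:ℝ)) := by
          rw [Finset.sum_ite, Finset.sum_const, Finset.sum_const]
          simp
        rw [hsplit]
        have hcard : ((Finset.univ.filter fun i => ¬ (x i = y i)).card : ℝ) = (h:ℝ) := by
          rw [hh]
          unfold hamming
          norm_cast
        rw [hcard]
        field_simp
    exact csInf_le ⟨0, fun r hr => W1Set_nonneg hr⟩ hone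
  · -- the value is the Lipschitz constant
    rw [trace_diag_mul]
    have hterm : ∀ z, f z * (((Matrix.diagonal (fun w => (c w : ℂ)) : Mat d n)) z z).re
        = (if z = x then f z / h else 0) - (if z = y then f z / h else 0) := by
      intro z
      rw [Matrix.diagonal_apply_eq, Complex.ofReal_re]
      simp only [hcdef]
      by_cases h1 : z = x
      · have h2 : ¬ z = y := fun hcon => hxy (h1.symm.trans hcon)
        rw [if_pos h1, if_pos h1, if_neg h2, if_neg h2]
        ring
      · by_cases h2 : z = y
        · rw [if_neg h1, if_neg h1, if_pos h2, if_pos h2]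
          ring
        · rw [if_neg h1, if_neg h1, if_neg h2, if_neg h2]
          ring
    rw [Finset.sum_congr rfl fun z _ => hterm z]
    rw [Finset.sum_sub_distrib,
      Finset.sum_ite_eq' Finset.univ x (fun z => f z / (h:ℝ)),
      Finset.sum_ite_eq' Finset.univ y (fun z => f z / (h:ℝ))]
    simp only [Finset.mem_univ, if_pos]
    rw [hLeq, sub_div]

end Main
theorem stmt9 {d n : ℕ} (hd : 2 ≤ d) (hn : 1 ≤ n) (f : Cfg d n → ℝ) :
    lipschitz (Matrix.diagonal (fun x => (f x : ℂ)) : Mat d n) = classicalLip f := by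
  have hd0 : d ≠ 0 := by omega
  have hub : ∀ r ∈ { r | ∃ X : Mat d n, X.IsHermitian ∧ X.trace = 0 ∧ W1 X ≤ 1 ∧
      r = (((Matrix.diagonal (fun x => (f x : ℂ)) : Mat d n) * X).trace).re },
      r ≤ classicalLip f := by
    rintro r ⟨X, hXh, hXtr, hW1, rfl⟩
    have hne : (W1Set X).Nonempty := W1Set_nonempty hd0 hXh hXtr
    have key : ∀ r' ∈ W1Set X,
        ((((Matrix.diagonal (fun x => (f x : ℂ)) : Mat d n)) * X).trace).re
          ≤ classicalLip f * r' := by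
      rintro r' ⟨Y, hYh, hYpt, hXsum, rfl⟩
      have htr1 : ((((Matrix.diagonal (fun x => (f x : ℂ)) : Mat d n)) * X).trace).re
          = ∑ i, ((((Matrix.diagonal (fun x => (f x : ℂ)) : Mat d n)) * Y i).trace).re := by
        rw [hXsum, Finset.mul_sum, Matrix.trace_sum, Complex.re_sum]
      rw [htr1]
      calc ∑ i, ((((Matrix.diagonal (fun x => (f x : ℂ)) : Mat d n)) * Y i).trace).re
          ≤ ∑ i, (classicalLip f / 2) * traceNorm (Y i) :=
            Finset.sum_le_sum fun i _ => trace_diag_mul_le hd hn f i (hYh i) (hYpt i)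
        _ = classicalLip f * ((1/2) * ∑ i, traceNorm (Y i)) := by
            rw [← Finset.mul_sum]; ring
    rcases eq_or_lt_of_le (classicalLip_nonneg f hd hn) with hL0 | hL0
    · obtain ⟨r0, hr0⟩ := hne
      have hk := key r0 hr0
      calc ((((Matrix.diagonal (fun x => (f x : ℂ)) : Mat d n)) * X).trace).re
          ≤ classicalLip f * r0 := hk
        _ = 0 := by rw [← hL0, zero_mul]
        _ ≤ classicalLip f := by rw [← hL0]
    · have h2 : ((((Matrix.diagonal (fun x => (f x : ℂ)) : Mat d n)) * X).trace).re
          / classicalLip f ≤ W1 X := by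
        refine le_csInf hne fun r' hr' => ?_
        rw [div_le_iff₀ hL0]
        calc ((((Matrix.diagonal (fun x => (f x : ℂ)) : Mat d n)) * X).trace).re
            ≤ classicalLip f * r' := key r' hr'
          _ = r' * classicalLip f := mul_comm _ _
      have h3 : ((((Matrix.diagonal (fun x => (f x : ℂ)) : Mat d n)) * X).trace).re
          / classicalLip f ≤ 1 := le_trans h2 hW1
      calc ((((Matrix.diagonal (fun x => (f x : ℂ)) : Mat d n)) * X).trace).re
          = (((((Matrix.diagonal (fun x => (f x : ℂ)) : Mat d n)) * X).trace).re
            / classicalLip f) * classicalLip f := by field_simp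
        _ ≤ 1 * classicalLip f := mul_le_mul_of_nonneg_right h3 (le_of_lt hL0)
        _ = classicalLip f := one_mul _
  obtain ⟨X0, hX0h, hX0tr, hX0W, hX0val⟩ := lip_mem hd hn f
  have hmem : classicalLip f ∈ { r | ∃ X : Mat d n, X.IsHermitian ∧ X.trace = 0 ∧ W1 X ≤ 1 ∧
      r = (((Matrix.diagonal (fun x => (f x : ℂ)) : Mat d n) * X).trace).re } :=
    ⟨X0, hX0h, hX0tr, hX0W, hX0val⟩
  exact le_antisymm (csSup_le ⟨_, hmem⟩ hub) (le_csSup ⟨_, hub⟩ hmem)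

end QW1
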